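/- Let p ≥ 3 be a prime, let λ ∈ ℤ_p^* be a unit that is not a root of unity, let l be the order of λ modulo p (the least positive integer with ν_p(λ^l − 1) ≥ 1), and let k = ν_p(λ^l − 1). Then the closure in ℚ_p of the set {λ^n : n ∈ ℕ} (equivalently, the closed subgroup of ℤ_p^* generated by λ) equals the disjoint union ⨆_{i=0}^{l−1} (λ^i + p^k·ℤ_p). -/

import Mathlib

open IsUltrametricDist


section
variable {p : ℕ} [Fact p.Prime]

lemma aux_pow_sub_one_le (y : ℚ_[p]) (hy : ‖y‖ ≤ 1) (m : ℕ) : ‖y ^ m - 1‖ ≤ ‖y - 1‖ := by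
  rw [← geom_sum_mul y m, norm_mul]
  calc ‖∑ i ∈ Finset.range m, y ^ i‖ * ‖y - 1‖ ≤ 1 * ‖y - 1‖ := by
        gcongr
        exact norm_sum_le_of_forall_le_of_nonneg zero_le_one fun i _ => by
          simpa using pow_le_one₀ (norm_nonneg y) hy
    _ = ‖y - 1‖ := one_mul _

lemma aux_pow_sub_one_sub (y : ℚ_[p]) (hy : ‖y‖ ≤ 1) (m : ℕ) :
    ‖y ^ m - 1 - (m : ℚ_[p]) * (y - 1)‖ ≤ ‖y - 1‖ ^ 2 := by
  have key : y ^ m - 1 - (m : ℚ_[p]) * (y - 1)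
      = (∑ i ∈ Finset.range m, (y ^ i - 1)) * (y - 1) := by
    rw [Finset.sum_sub_distrib, Finset.sum_const, Finset.card_range, sub_mul,
      geom_sum_mul]
    ring
  rw [key, norm_mul, sq]
  gcongr
  exact norm_sum_le_of_forall_le_of_nonneg (norm_nonneg _)
    fun i _ => aux_pow_sub_one_le y hy i
end

section
variable {p : ℕ} [Fact p.Prime]

lemma norm_two_eq_one (hp : 3 ≤ p) : ‖(2 : ℚ_[p])‖ = 1 := by
  have h1 : ‖(2 : ℚ_[p])‖ ≤ 1 := by simpa using Padic.norm_int_le_one (p := p) 2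
  rcases lt_or_eq_of_le h1 with h | h
  · exfalso
    have h2 := (PadicInt.norm_int_lt_one_iff_dvd (p := p) 2).mp (by rw [PadicInt.norm_def]; exact_mod_cast h)
    have : (p : ℤ) ≤ 2 := Int.le_of_dvd (by norm_num) h2
    omega
  · exact h

end

section
variable {p : ℕ} [Fact p.Prime]

lemma norm_eq_one_of_sub_lt {y : ℚ_[p]} (h : ‖y - 1‖ < 1) : ‖y‖ = 1 := by
  have : y = (y - 1) + 1 := by ring
  rw [this, Padic.add_eq_max_of_ne (by simp [h.ne]), norm_one, max_eq_right h.le]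

lemma lte_step (hp : 3 ≤ p) (y : ℚ_[p]) (j : ℕ) (hj : 1 ≤ j)
    (hy : ‖y - 1‖ = (p : ℝ) ^ (-(j : ℤ))) :
    ‖y ^ p - 1‖ = (p : ℝ) ^ (-((j : ℤ) + 1)) := by
  have hp1 : (1 : ℝ) < p := by exact_mod_cast lt_of_lt_of_le (by norm_num) hp
  have hp0 : (0 : ℝ) < p := by linarith
  have hylt : ‖y - 1‖ < 1 := by
    rw [hy]; exact zpow_lt_one_of_neg₀ hp1 (by omega)
  have hy1 : ‖y‖ = 1 := norm_eq_one_of_sub_lt hylt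
  -- the sum S
  set S : ℚ_[p] := ∑ i ∈ Finset.range p, (y ^ i - 1) with hS_def
  have hT : ‖(∑ i ∈ Finset.range p, (i : ℚ_[p]))‖ ≤ (p : ℝ)⁻¹ := by
    have hcast : (∑ i ∈ Finset.range p, (i : ℚ_[p])) * 2 = ((p * (p - 1) : ℕ) : ℚ_[p]) := by
      rw [← Nat.cast_sum, ← Nat.cast_ofNat, ← Nat.cast_mul, Finset.sum_range_id_mul_two]
    have h2 : ‖(∑ i ∈ Finset.range p, (i : ℚ_[p]))‖ * 1 = ‖((p * (p-1) : ℕ) : ℚ_[p])‖ := by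
      rw [← norm_two_eq_one hp, ← norm_mul, hcast]
    rw [mul_one] at h2
    rw [h2, Nat.cast_mul, norm_mul, Padic.norm_p]
    calc (p:ℝ)⁻¹ * ‖((p-1 : ℕ) : ℚ_[p])‖ ≤ (p:ℝ)⁻¹ * 1 := by
          gcongr
          have := Padic.norm_int_le_one (p := p) ((p - 1 : ℕ) : ℤ)
          simpa using this
      _ = (p:ℝ)⁻¹ := mul_one _
  have hS : ‖S‖ ≤ (p : ℝ) ^ (-((j:ℤ) + 1)) := by
    have hsplit : S = (∑ i ∈ Finset.range p, (y ^ i - 1 - (i : ℚ_[p]) * (y - 1)))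
        + (∑ i ∈ Finset.range p, (i : ℚ_[p])) * (y - 1) := by
      rw [Finset.sum_mul, ← Finset.sum_add_distrib]
      rw [hS_def]; apply Finset.sum_congr rfl; intro i _; ring
    rw [hsplit]
    refine le_trans (Padic.nonarchimedean _ _) (max_le ?_ ?_)
    · refine le_trans (norm_sum_le_of_forall_le_of_nonneg (by positivity)
        fun i _ => aux_pow_sub_one_sub y hy1.le i) ?_
      rw [hy, ← zpow_natCast, ← zpow_mul]
      apply zpow_le_zpow_right₀ hp1.le
      omega
    · rw [norm_mul, hy]
      calc ‖(∑ i ∈ Finset.range p, (i : ℚ_[p]))‖ * (p:ℝ) ^ (-(j:ℤ))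
          ≤ (p:ℝ)⁻¹ * (p:ℝ) ^ (-(j:ℤ)) := by gcongr
        _ = (p:ℝ) ^ (-((j:ℤ) + 1)) := by
            rw [← zpow_neg_one, ← zpow_add₀ (ne_of_gt hp0)]; ring_nf
  have hkey : y ^ p - 1 = (p : ℚ_[p]) * (y - 1) + S * (y - 1) := by
    have := geom_sum_mul y p
    rw [hS_def, Finset.sum_sub_distrib, Finset.sum_const, Finset.card_range, sub_mul, this]
    push_cast; ring
  have hn1 : ‖(p : ℚ_[p]) * (y - 1)‖ = (p : ℝ) ^ (-((j:ℤ) + 1)) := by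
    rw [norm_mul, Padic.norm_p, hy, ← zpow_neg_one, ← zpow_add₀ (ne_of_gt hp0)]
    ring_nf
  have hn2 : ‖S * (y - 1)‖ < (p : ℝ) ^ (-((j:ℤ) + 1)) := by
    rw [norm_mul]
    calc ‖S‖ * ‖y - 1‖ ≤ (p : ℝ) ^ (-((j:ℤ) + 1)) * ‖y - 1‖ := by gcongr
      _ < (p : ℝ) ^ (-((j:ℤ) + 1)) * 1 := by
          have : (0:ℝ) < (p : ℝ) ^ (-((j:ℤ) + 1)) := by positivity
          exact (mul_lt_mul_iff_right₀ this).mpr hylt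
      _ = _ := mul_one _
  rw [hkey, Padic.add_eq_max_of_ne (by rw [hn1]; exact ne_of_gt hn2),
    hn1, max_eq_left (le_of_lt (hn1 ▸ hn2))]
end

section
variable {p : ℕ} [Fact p.Prime]

lemma lte_iter (hp : 3 ≤ p) (g : ℚ_[p]) (k : ℕ) (hk1 : 1 ≤ k)
    (hg : ‖g - 1‖ = (p : ℝ) ^ (-(k : ℤ))) (n : ℕ) :
    ‖g ^ (p ^ n) - 1‖ = (p : ℝ) ^ (-((k + n : ℕ) : ℤ)) := by
  induction n with
  | zero => simpa using hg
  | succ n ih =>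
    have : g ^ (p ^ (n+1)) = (g ^ (p ^ n)) ^ p := by rw [← pow_mul, pow_succ]
    rw [this]
    have h := lte_step hp (g ^ (p ^ n)) (k + n) (by omega) (by exact_mod_cast ih)
    rw [h]; norm_cast

lemma nat_approx (w : ℚ_[p]) (hw : ‖w‖ ≤ 1) : ∃ a : ℕ, ‖w - (a : ℚ_[p])‖ ≤ (p : ℝ) ^ (-(1 : ℤ)) := by
  set z : ℤ_[p] := ⟨w, hw⟩ with hz
  refine ⟨z.appr 1, ?_⟩
  have h1 : ‖z - (z.appr 1 : ℤ_[p])‖ ≤ (p : ℝ) ^ (-(1:ℤ)) := by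
    have := (PadicInt.norm_le_pow_iff_mem_span_pow (z - (z.appr 1 : ℤ_[p])) 1).mpr
      (PadicInt.appr_spec 1 z)
    exact_mod_cast this
  have h2 : ((z - (z.appr 1 : ℤ_[p]) : ℤ_[p]) : ℚ_[p]) = w - (z.appr 1 : ℚ_[p]) := by
    exact (PadicInt.coe_sub _ _).trans
      (congrArg (fun a : ℚ_[p] => (z : ℚ_[p]) - a) (PadicInt.coe_natCast _))
  rwa [PadicInt.norm_def, h2] at h1
end

section
variable {p : ℕ} [Fact p.Prime]

lemma density (hp : 3 ≤ p) (g : ℚ_[p]) (k : ℕ) (hk1 : 1 ≤ k)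
    (hg : ‖g - 1‖ = (p : ℝ) ^ (-(k : ℤ))) (x : ℚ_[p])
    (hx : ‖x - 1‖ ≤ (p : ℝ) ^ (-(k : ℤ))) (N : ℕ) :
    ∃ m : ℕ, ‖g ^ m - x‖ ≤ (p : ℝ) ^ (-((k + N : ℕ) : ℤ)) := by
  have hp1 : (1 : ℝ) < p := by exact_mod_cast lt_of_lt_of_le (by norm_num) hp
  have hp0 : (0 : ℝ) < p := by linarith
  have hg1 : ‖g‖ = 1 := norm_eq_one_of_sub_lt (by rw [hg]; exact zpow_lt_one_of_neg₀ hp1 (by omega))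
  induction N with
  | zero =>
    exact ⟨0, by simpa [norm_sub_rev] using hx⟩
  | succ N ih =>
    obtain ⟨m, hm⟩ := ih
    set M := k + N with hM
    have hgm1 : ‖g ^ m‖ = 1 := by rw [norm_pow, hg1, one_pow]
    have hgm0 : g ^ m ≠ 0 := by intro h0; rw [h0, norm_zero] at hgm1; norm_num at hgm1
    set h : ℚ_[p] := g ^ (p ^ N) with hh
    have hs : ‖h - 1‖ = (p : ℝ) ^ (-(M : ℤ)) := lte_iter hp g k hk1 hg N
    have hsne : h - 1 ≠ 0 := by
      intro h0; rw [h0, norm_zero] at hs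
      exact absurd hs.symm (ne_of_gt (by positivity))
    set t : ℚ_[p] := x * (g ^ m)⁻¹ - 1 with ht
    have htnorm : ‖t‖ ≤ (p : ℝ) ^ (-(M : ℤ)) := by
      have : t = (x - g ^ m) * (g ^ m)⁻¹ := by
        rw [ht]; field_simp
      rw [this, norm_mul, norm_inv, hgm1, inv_one, mul_one, norm_sub_rev]
      exact hm
    set w : ℚ_[p] := t / (h - 1) with hw
    have hwnorm : ‖w‖ ≤ 1 := by
      rw [hw, norm_div, hs, div_le_one (by positivity)]
      exact htnorm
    obtain ⟨a, ha⟩ := nat_approx w hwnorm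
    refine ⟨m + a * p ^ N, ?_⟩
    have hpow : g ^ (m + a * p ^ N) = g ^ m * h ^ a := by
      rw [hh, ← pow_mul, ← pow_add, mul_comm (a) (p ^ N)]
    have hdecomp : g ^ (m + a * p ^ N) - x
        = g ^ m * ((h ^ a - 1 - (a : ℚ_[p]) * (h - 1)) + (h - 1) * ((a : ℚ_[p]) - w)) := by
      rw [hpow]
      have hws : (h - 1) * w = t := by rw [hw]; field_simp
      have hx' : x = g ^ m * (1 + t) := by rw [ht]; field_simp; ring
      linear_combination g ^ m * hws - hx'
    rw [hdecomp, norm_mul, hgm1, one_mul]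
    have hh1 : ‖h‖ ≤ 1 := by rw [hh, norm_pow, hg1, one_pow]
    have e1 : ‖h ^ a - 1 - (a : ℚ_[p]) * (h - 1)‖ ≤ (p : ℝ) ^ (-((k + (N+1) : ℕ) : ℤ)) := by
      refine le_trans (aux_pow_sub_one_sub h hh1 a) ?_
      rw [hs, ← zpow_natCast, ← zpow_mul]
      apply zpow_le_zpow_right₀ hp1.le
      push_cast; omega
    have e2 : ‖(h - 1) * ((a : ℚ_[p]) - w)‖ ≤ (p : ℝ) ^ (-((k + (N+1) : ℕ) : ℤ)) := by
      rw [norm_mul, hs, ← norm_neg, neg_sub]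
      calc (p:ℝ) ^ (-(M:ℤ)) * ‖w - (a:ℚ_[p])‖ ≤ (p:ℝ) ^ (-(M:ℤ)) * (p:ℝ) ^ (-1:ℤ) := by gcongr
        _ = (p:ℝ) ^ (-((k + (N+1) : ℕ) : ℤ)) := by
            rw [← zpow_add₀ (ne_of_gt hp0)]
            congr 1; push_cast; omega
    exact le_trans (Padic.nonarchimedean _ _) (max_le e1 e2)
end

theorem stmt_13 (p : ℕ) [Fact p.Prime] (hp : 3 ≤ p)
    (lam : ℚ_[p]) (hunit : ‖lam‖ = 1)
    (hru : ∀ n : ℕ, 0 < n → lam ^ n ≠ 1)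
    -- `l` is the order of `lam` modulo `p`
    (l : ℕ) (hl0 : 0 < l) (hl : ‖lam ^ l - 1‖ ≤ (p : ℝ)⁻¹)
    (hlmin : ∀ m : ℕ, 0 < m → ‖lam ^ m - 1‖ ≤ (p : ℝ)⁻¹ → l ≤ m)
    -- `k = ν_p(lam ^ l - 1)`
    (k : ℕ) (hk : ‖lam ^ l - 1‖ = (p : ℝ) ^ (-(k : ℤ))) :
    (closure {x : ℚ_[p] | ∃ n : ℕ, x = lam ^ n} =
      ⋃ i ∈ Finset.range l, {x : ℚ_[p] | ‖x - lam ^ i‖ ≤ (p : ℝ) ^ (-(k : ℤ))}) ∧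
    (↑(Finset.range l) : Set ℕ).PairwiseDisjoint
      (fun i => {x : ℚ_[p] | ‖x - lam ^ i‖ ≤ (p : ℝ) ^ (-(k : ℤ))}) := by
  have hp1 : (1 : ℝ) < p := by exact_mod_cast lt_of_lt_of_le (by norm_num) hp
  have hp0 : (0 : ℝ) < p := by linarith
  have hkp : (p : ℝ) ^ (-(k : ℤ)) ≤ (p : ℝ)⁻¹ := hk ▸ hl
  have hk1 : 1 ≤ k := by
    by_contra hc
    push_neg at hc
    interval_cases k
    simp at hkp
    have : (p:ℝ)⁻¹ < 1 := inv_lt_one_of_one_lt₀ hp1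
    linarith
  have hlam0 : lam ≠ 0 := by intro h0; rw [h0, norm_zero] at hunit; norm_num at hunit
  have hlami : ∀ i : ℕ, ‖lam ^ i‖ = 1 := fun i => by rw [norm_pow, hunit, one_pow]
  have hlami0 : ∀ i : ℕ, lam ^ i ≠ 0 := fun i => pow_ne_zero i hlam0
  set g : ℚ_[p] := lam ^ l with hg_def
  have hg : ‖g - 1‖ = (p : ℝ) ^ (-(k : ℤ)) := hk
  have hg1 : ‖g‖ = 1 := hlami l
  -- key: distance between distinct powers lam^i, lam^j (i<j<l) is > p⁻¹
  have hsep : ∀ i j : ℕ, i < j → j < l → (p : ℝ)⁻¹ < ‖lam ^ j - lam ^ i‖ := by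
    intro i j hij hjl
    have hd : lam ^ j - lam ^ i = lam ^ i * (lam ^ (j - i) - 1) := by
      rw [mul_sub, mul_one, ← pow_add]
      congr 2
      omega
    rw [hd, norm_mul, hlami i, one_mul]
    by_contra hc
    push_neg at hc
    have := hlmin (j - i) (by omega) hc
    omega
  constructor
  · apply le_antisymm
    · -- closure ⊆ union: the union is closed and contains the set
      apply closure_minimal
      · -- S ⊆ U
        rintro x ⟨n, rfl⟩
        apply Set.mem_biUnion (Finset.mem_range.mpr (Nat.mod_lt n hl0))
        have hn : lam ^ n = lam ^ (n % l) * g ^ (n / l) := by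
          rw [hg_def, ← pow_mul, ← pow_add, Nat.mod_add_div]
        have : lam ^ n - lam ^ (n % l) = lam ^ (n % l) * (g ^ (n / l) - 1) := by
          rw [hn]; ring
        simp only [Set.mem_setOf_eq]
        rw [this, norm_mul, hlami, one_mul, ← hg]
        exact aux_pow_sub_one_le g hg1.le _
      · -- U is closed
        apply Set.Finite.isClosed_biUnion (Finset.finite_toSet _)
        intro i _
        have : {x : ℚ_[p] | ‖x - lam ^ i‖ ≤ (p : ℝ) ^ (-(k : ℤ))}
            = Metric.closedBall (lam ^ i) ((p : ℝ) ^ (-(k : ℤ))) := by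
          ext x; simp [Metric.mem_closedBall, dist_eq_norm]
        rw [this]
        exact Metric.isClosed_closedBall
    · -- union ⊆ closure
      intro x hx
      simp only [Set.mem_iUnion, Finset.mem_range, Set.mem_setOf_eq] at hx
      obtain ⟨i, hil, hxi⟩ := hx
      rw [Metric.mem_closure_iff]
      intro ε hε
      obtain ⟨N, hN⟩ := exists_pow_lt_of_lt_one hε (inv_lt_one_of_one_lt₀ hp1)
      set y : ℚ_[p] := x * (lam ^ i)⁻¹ with hy
      have hy1 : ‖y - 1‖ ≤ (p : ℝ) ^ (-(k : ℤ)) := by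
        have : y - 1 = (x - lam ^ i) * (lam ^ i)⁻¹ := by
          rw [hy]; field_simp
        rw [this, norm_mul, norm_inv, hlami, inv_one, mul_one]
        exact hxi
      obtain ⟨m, hm⟩ := density hp g k hk1 hg y hy1 N
      refine ⟨lam ^ (i + l * m), ⟨i + l * m, rfl⟩, ?_⟩
      have hb : x - lam ^ (i + l * m) = lam ^ i * (y - g ^ m) := by
        have hxy : x = lam ^ i * y := by rw [hy]; field_simp
        have h2 : lam ^ (i + l * m) = lam ^ i * g ^ m := by
          rw [hg_def, ← pow_mul, ← pow_add]
        rw [h2]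
        linear_combination hxy
      rw [dist_eq_norm, hb, norm_mul, hlami, one_mul, norm_sub_rev]
      calc ‖g ^ m - y‖ ≤ (p : ℝ) ^ (-((k + N : ℕ) : ℤ)) := hm
        _ ≤ (p : ℝ) ^ (-(N : ℤ)) := by
            apply zpow_le_zpow_right₀ hp1.le; omega
        _ = ((p : ℝ)⁻¹) ^ N := by
            rw [← zpow_neg_one, ← zpow_natCast ((p:ℝ) ^ (-1:ℤ)), ← zpow_mul]
            congr 1; ring
        _ < ε := hN
  · -- pairwise disjointness
    intro i hi j hj hij
    simp only [Finset.coe_range, Set.mem_Iio] at hi hj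
    apply Set.disjoint_left.mpr
    intro x hxi hxj
    simp only [Set.mem_setOf_eq] at hxi hxj
    have hdist : ‖lam ^ j - lam ^ i‖ ≤ (p : ℝ)⁻¹ := by
      have heq : lam ^ j - lam ^ i = (x - lam ^ i) + -(x - lam ^ j) := by ring
      rw [heq]
      calc ‖(x - lam ^ i) + -(x - lam ^ j)‖
          ≤ max ‖x - lam ^ i‖ ‖-(x - lam ^ j)‖ := Padic.nonarchimedean _ _
        _ ≤ (p : ℝ) ^ (-(k : ℤ)) := max_le hxi (by rw [norm_neg]; exact hxj)
        _ ≤ (p : ℝ)⁻¹ := hkp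
    rcases lt_or_gt_of_ne hij with h | h
    · exact absurd hdist (not_le.mpr (hsep i j h hj))
    · rw [norm_sub_rev] at hdist
      exact absurd hdist (not_le.mpr (hsep j i h hi))
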